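/- Let N, K be positive integers, let C be a real symmetric N×N matrix, let s be a nonnegative real number, and define J(X, Y) = (1/2)·‖C − X·Yᵀ‖_F² + (s/2)·‖X − Y‖_F² for N×K real matrices X, Y. Then for any fixed N×K real matrix X, the map Y ↦ ∇_Y J(X, Y) = (Y·Xᵀ − C)·X + s·(Y − X) is globally Lipschitz continuous with respect to the Frobenius norm, with Lipschitz constant L₂(X) = ‖Xᵀ·X + s·I_K‖₂, i.e., for all N×K real matrices Y, Y' it holds that ‖∇_Y J(X, Y) − ∇_Y J(X, Y')‖_F ≤ ‖Xᵀ·X + s·I_K‖₂ · ‖Y − Y'‖_F. -/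

import Mathlib

open Matrix

/-- The Frobenius norm of a real matrix. -/
noncomputable def frobNorm {N K : ℕ} (A : Matrix (Fin N) (Fin K) ℝ) : ℝ :=
  Real.sqrt (∑ i, ∑ k, (A i k) ^ 2)

/-- The spectral norm (operator 2-norm, i.e. largest singular value) of a real
square matrix, as the operator norm of the induced map on Euclidean space. -/
noncomputable def matSpectralNorm {K : ℕ} (M : Matrix (Fin K) (Fin K) ℝ) : ℝ :=
  ‖LinearMap.toContinuousLinearMap (Matrix.toEuclideanLin M)‖

lemma frobNorm_mul_le {N K : ℕ} (A : Matrix (Fin N) (Fin K) ℝ)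
    (M : Matrix (Fin K) (Fin K) ℝ) (hM : Mᵀ = M) :
    frobNorm (A * M) ≤ matSpectralNorm M * frobNorm A := by
  set L := LinearMap.toContinuousLinearMap (Matrix.toEuclideanLin M)
  have hL : 0 ≤ ‖L‖ := norm_nonneg _
  have key : ∀ i, ∑ k, ((A * M) i k) ^ 2 ≤ ‖L‖ ^ 2 * ∑ k, (A i k) ^ 2 := by
    intro i
    have h1 : ‖L ((WithLp.equiv 2 (Fin K → ℝ)).symm (A i))‖ ≤
        ‖L‖ * ‖(WithLp.equiv 2 (Fin K → ℝ)).symm (A i)‖ := L.le_opNorm _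
    have hrow : L ((WithLp.equiv 2 (Fin K → ℝ)).symm (A i)) =
        (WithLp.equiv 2 (Fin K → ℝ)).symm ((A * M) i) := by
      show Matrix.toEuclideanLin M ((WithLp.equiv 2 (Fin K → ℝ)).symm (A i)) = _
      rw [WithLp.equiv_symm_apply, Matrix.toEuclideanLin_apply_piLp_toLp]
      congr 1
      conv_lhs => rw [← hM]
      ext k
      simp [Matrix.mulVec, Matrix.mul_apply, dotProduct, Matrix.transpose_apply, mul_comm]
    have hnorm : ∀ v : Fin K → ℝ, ‖(WithLp.equiv 2 (Fin K → ℝ)).symm v‖ =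
        Real.sqrt (∑ k, (v k) ^ 2) := by
      intro v
      rw [EuclideanSpace.norm_eq]
      simp [sq_abs]
    rw [hrow, hnorm, hnorm] at h1
    have h2 : Real.sqrt (∑ k, ((A * M) i k) ^ 2) ^ 2 ≤
        (‖L‖ * Real.sqrt (∑ k, (A i k) ^ 2)) ^ 2 := by
      apply sq_le_sq' _ h1
      have := Real.sqrt_nonneg (∑ k, ((A * M) i k) ^ 2)
      nlinarith [mul_nonneg hL (Real.sqrt_nonneg (∑ k, (A i k) ^ 2))]
    rw [Real.sq_sqrt (by positivity), mul_pow, Real.sq_sqrt (by positivity)] at h2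
    exact h2
  have hsum : ∑ i, ∑ k, ((A * M) i k) ^ 2 ≤ ‖L‖ ^ 2 * ∑ i, ∑ k, (A i k) ^ 2 := by
    rw [Finset.mul_sum]
    exact Finset.sum_le_sum fun i _ => key i
  unfold frobNorm matSpectralNorm
  calc Real.sqrt (∑ i, ∑ k, ((A * M) i k) ^ 2)
      ≤ Real.sqrt (‖L‖ ^ 2 * ∑ i, ∑ k, (A i k) ^ 2) := Real.sqrt_le_sqrt hsum
    _ = ‖L‖ * Real.sqrt (∑ i, ∑ k, (A i k) ^ 2) := by
        rw [Real.sqrt_mul (by positivity), Real.sqrt_sq hL]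

/-- For `J(X, Y) = (1/2)·‖C − X·Yᵀ‖_F² + (s/2)·‖X − Y‖_F²` with `C` symmetric and `s ≥ 0`,
the map `Y ↦ ∇_Y J(X, Y) = (Y·Xᵀ − C)·X + s·(Y − X)` is globally Lipschitz in the Frobenius
norm with constant `‖Xᵀ·X + s·I_K‖₂`. -/
theorem gradY_lipschitz (N K : ℕ) (hN : 0 < N) (hK : 0 < K)
    (C : Matrix (Fin N) (Fin N) ℝ) (hC : Cᵀ = C) (s : ℝ) (hs : 0 ≤ s)
    (X : Matrix (Fin N) (Fin K) ℝ) :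
    ∀ Y Y' : Matrix (Fin N) (Fin K) ℝ,
      frobNorm (((Y * Xᵀ - C) * X + s • (Y - X)) - ((Y' * Xᵀ - C) * X + s • (Y' - X)))
        ≤ matSpectralNorm (Xᵀ * X + s • (1 : Matrix (Fin K) (Fin K) ℝ)) * frobNorm (Y - Y') := by
  intro Y Y'
  have heq : ((Y * Xᵀ - C) * X + s • (Y - X)) - ((Y' * Xᵀ - C) * X + s • (Y' - X)) =
      (Y - Y') * (Xᵀ * X + s • (1 : Matrix (Fin K) (Fin K) ℝ)) := by
    rw [Matrix.mul_add, Matrix.sub_mul, Matrix.sub_mul, Matrix.sub_mul, Matrix.mul_smul,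
      Matrix.mul_one, Matrix.mul_assoc, Matrix.mul_assoc, smul_sub, smul_sub, smul_sub]
    abel
  rw [heq]
  exact frobNorm_mul_le _ _ (by
    rw [Matrix.transpose_add, Matrix.transpose_mul, Matrix.transpose_transpose,
      Matrix.transpose_smul, Matrix.transpose_one])
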